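/- An abelian infinite Fort transformation group (F,G) is Li–Yorke chaotic if and only if the set H = {x ∈ F : xG is infinite and st(x) is infinite} is uncountable. -/

import Mathlib

open Pointwise

/-- The Fort topology on `F` with particular point `b`: a set is open iff it misses `b`
or has finite complement. -/
def fortTop (F : Type*) (b : F) : TopologicalSpace F where
  IsOpen U := b ∈ U → (Uᶜ : Set F).Finite
  isOpen_univ := fun _ => by simp
  isOpen_inter := fun U V hU hV h => by
    rw [Set.compl_inter]
    exact (hU h.1).union (hV h.2)
  isOpen_sUnion := fun S hS h => by
    obtain ⟨U, hUS, hbU⟩ := h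
    exact (hS U hUS hbU).subset (Set.compl_subset_compl.2 (Set.subset_sUnion_of_mem hUS))

/-- Proximality in a transformation semigroup (via a net encoded as a nontrivial filter). -/
def ProxPair (S X : Type*) [TopologicalSpace X] [SMul S X] (x y : X) : Prop :=
  ∃ z : X, ∃ l : Filter S, l.NeBot ∧
    Filter.Tendsto (fun s => s • x) l (nhds z) ∧ Filter.Tendsto (fun s => s • y) l (nhds z)

/-- The basic entourage `α_D = ((F∖D) × (F∖D)) ∪ Δ_D` of the Fort uniformity. -/
def fortEntourage (F : Type*) (D : Set F) : Set (F × F) :=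
  (Dᶜ ×ˢ Dᶜ) ∪ {p : F × F | p.1 ∈ D ∧ p.1 = p.2}

/-- Asymptoticity modulo an ideal `I` in a Fort transformation group `(F,G)`, expressed via
the generating entourages `α_D` (finite `D ⊆ F∖{b}`) of the unique uniformity of the Fort
space `F` with particular point `b`. -/
def FortAsymMod (G F : Type*) [SMul G F] (b : F) (I : Set (Set G)) (x y : F) : Prop :=
  ∀ D : Set F, D.Finite → b ∉ D → {g : G | (g • x, g • y) ∉ fortEntourage F D} ∈ I


lemma aux_not_finiteIndex {G F : Type*} [Group G] [MulAction G F] {x : F}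
    (hx : (MulAction.orbit G x).Infinite) : ¬ (MulAction.stabilizer G x).FiniteIndex := by
  intro hfi
  have h1 : Infinite (MulAction.orbit G x) := hx.to_subtype
  have h2 : Infinite (G ⧸ MulAction.stabilizer G x) :=
    Equiv.infinite_iff (MulAction.orbitEquivQuotientStabilizer G x) |>.mp h1
  have h3 : (MulAction.stabilizer G x).index = 0 := by
    rw [Subgroup.index_eq_card]
    exact @Nat.card_eq_zero_of_infinite _ h2
  exact hfi.index_ne_zero h3

lemma aux_cover {G F : Type*} [CommGroup G] [MulAction G F]
    {x y : F} (hx : (MulAction.orbit G x).Infinite) (hy : (MulAction.orbit G y).Infinite)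
    {K : Set F} (hK : K.Finite) : ∃ g : G, g • x ∉ K ∧ g • y ∉ K := by
  classical
  by_contra hc
  push_neg at hc
  have hcov : ∀ g : G, g • x ∈ K ∨ g • y ∈ K := fun g => or_iff_not_imp_left.mpr (hc g)
  set pt : Bool → F := fun bb => if bb then x else y with hpt
  set Hs : Bool × F → Subgroup G := fun i => MulAction.stabilizer G (pt i.1) with hHs
  set gg : Bool × F → G := fun i =>
    if h : ∃ g0 : G, g0 • pt i.1 = i.2 then h.choose else 1 with hgg
  set s : Finset (Bool × F) := Finset.univ ×ˢ hK.toFinset with hs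
  have hcovers : ⋃ i ∈ s, (gg i) • (Hs i : Set G) = Set.univ := by
    apply Set.eq_univ_of_forall
    intro g
    simp only [Set.mem_iUnion]
    have key : ∀ bb : Bool, g • pt bb ∈ K → ∃ i ∈ s, g ∈ gg i • (Hs i : Set G) := by
      intro bb hmem
      refine ⟨(bb, g • pt bb), ?_, ?_⟩
      · simp [hs, hK.mem_toFinset, hmem]
      · have hex : ∃ g0 : G, g0 • pt bb = g • pt bb := ⟨g, rfl⟩
        have hgeq : gg (bb, g • pt bb) = hex.choose := dif_pos hex
        rw [Set.mem_smul_set_iff_inv_smul_mem, hgeq]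
        have hspec := hex.choose_spec
        show hex.choose⁻¹ * g ∈ MulAction.stabilizer G (pt bb)
        rw [MulAction.mem_stabilizer_iff, mul_smul, inv_smul_eq_iff]
        exact hspec.symm
      
    rcases hcov g with h | h
    · obtain ⟨i, his, hgi⟩ := key true (by simpa [hpt] using h)
      exact ⟨i, his, hgi⟩
    · obtain ⟨i, his, hgi⟩ := key false (by simpa [hpt] using h)
      exact ⟨i, his, hgi⟩
  obtain ⟨i, _, hfi⟩ := Subgroup.exists_finiteIndex_of_leftCoset_cover hcovers
  rcases i with ⟨bb, d⟩
  cases bb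
  · exact aux_not_finiteIndex hy (by simpa [hHs, hpt] using hfi)
  · exact aux_not_finiteIndex hx (by simpa [hHs, hpt] using hfi)

lemma aux_fin {G F : Type*} [Group G] [MulAction G F] {x : F}
    (hst : ((MulAction.stabilizer G x : Subgroup G) : Set G).Finite) {K : Set F} (hK : K.Finite) :
    {g : G | g • x ∈ K}.Finite := by
  have hsub : {g : G | g • x ∈ K} ⊆ ⋃ d ∈ K, {g : G | g • x = d} :=
    fun g hg => Set.mem_biUnion hg rfl
  refine Set.Finite.subset (hK.biUnion fun d _ => ?_) hsub
  by_cases h : ∃ g0 : G, g0 • x = d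
  · obtain ⟨g0, hg0⟩ := h
    have hsub2 : {g : G | g • x = d} ⊆ (fun h => g0 * h) '' ((MulAction.stabilizer G x : Subgroup G) : Set G) := by
      intro g hg
      refine ⟨g0⁻¹ * g, ?_, by group⟩
      show g0⁻¹ * g ∈ MulAction.stabilizer G x
      rw [MulAction.mem_stabilizer_iff, mul_smul, hg, ← hg0, inv_smul_smul]
    exact (hst.image _).subset hsub2
  · have he : {g : G | g • x = d} = ∅ := by
      ext g; simp only [Set.mem_setOf_eq, Set.mem_empty_iff_false, iff_false]
      exact fun hg => h ⟨g, hg⟩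
    simp [he]

lemma fort_isOpen_iff {F : Type*} (b : F) (U : Set F) :
    @IsOpen F (fortTop F b) U ↔ (b ∈ U → (Uᶜ : Set F).Finite) := Iff.rfl

lemma fort_nhds_ne {F : Type*} (b : F) {z : F} (hz : z ≠ b) :
    @nhds F (fortTop F b) z = pure z := by
  letI := fortTop F b
  refine le_antisymm (Filter.le_pure_iff.2 (IsOpen.mem_nhds ?_ rfl)) (pure_le_nhds z)
  rw [fort_isOpen_iff]
  exact fun h => absurd (Set.mem_singleton_iff.mp h).symm hz

lemma fort_mem_nhds_b {F : Type*} (b : F) {U : Set F} (hU : b ∈ U) (hUc : (Uᶜ : Set F).Finite) :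
    U ∈ @nhds F (fortTop F b) b := by
  letI := fortTop F b
  exact IsOpen.mem_nhds ((fort_isOpen_iff b U).mpr (fun _ => hUc)) hU

/-- An abelian infinite Fort transformation group `(F,G)` is Li–Yorke chaotic (i.e. it has an
uncountable set all of whose distinct pairs are proximal and non-asymptotic modulo the ideal
of finite subsets of `G`) iff `H = {x : xG and st(x) are infinite}` is uncountable. -/
theorem stmt17 {F G : Type*} [CommGroup G] [MulAction G F] (b : F) (hF : Infinite F)
    (hb : ∀ g : G, g • b = b)
    (hcont : ∀ g : G, @Continuous F F (fortTop F b) (fortTop F b) fun x => g • x) :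
    (∃ D : Set F, ¬ D.Countable ∧ ∀ x ∈ D, ∀ y ∈ D, x ≠ y →
        @ProxPair G F (fortTop F b) _ x y ∧
        ¬ FortAsymMod G F b {A : Set G | A.Finite} x y) ↔
    ¬ {x : F | (MulAction.orbit G x).Infinite ∧
        (MulAction.stabilizer G x : Set G).Infinite}.Countable := by
  classical
  letI : TopologicalSpace F := fortTop F b
  set Hset : Set F := {x : F | (MulAction.orbit G x).Infinite ∧
      (MulAction.stabilizer G x : Set G).Infinite} with hHset
  constructor
  · rintro ⟨S, hSunc, hS⟩ hHc
    have claim1 : ∀ x ∈ S, ¬ (MulAction.orbit G x).Infinite → x = b := by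
      intro x hxS hfin
      have hy : ∃ y ∈ S, y ≠ x := by
        by_contra hno
        push_neg at hno
        exact hSunc ((Set.countable_singleton x).mono (fun z hz => hno z hz))
      obtain ⟨y, hyS, hyx⟩ := hy
      obtain ⟨z, l, hne, htx, hty⟩ := (hS x hxS y hyS (Ne.symm hyx)).1
      have hzb : z = b := by
        by_contra hzb
        rw [fort_nhds_ne b hzb, Filter.tendsto_pure] at htx hty
        obtain ⟨g, hgx, hgy⟩ := (htx.and hty).exists
        exact (Ne.symm hyx) (MulAction.injective g (hgx.trans hgy.symm))
      rw [hzb] at htx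
      rw [Set.not_infinite] at hfin
      have hU : ((MulAction.orbit G x) \ {b})ᶜ ∈ @nhds F (fortTop F b) b :=
        fort_mem_nhds_b b (by simp) (by simpa using hfin.diff)
      have hpre : (fun g : G => g • x) ⁻¹' ((MulAction.orbit G x) \ {b})ᶜ ∈ l := htx hU
      obtain ⟨g, hg⟩ := Filter.nonempty_of_mem hpre
      have horb : g • x ∈ MulAction.orbit G x := ⟨g, rfl⟩
      have hgb : g • x = b := by
        by_contra hne'
        exact hg ⟨horb, hne'⟩
      calc x = g⁻¹ • (g • x) := (inv_smul_smul g x).symm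
        _ = g⁻¹ • b := by rw [hgb]
        _ = b := hb g⁻¹
    have claim2 : {x ∈ S |
        ((MulAction.stabilizer G x : Subgroup G) : Set G).Finite}.Subsingleton := by
      intro x hx y hy'
      by_contra hxy
      have hna := (hS x hx.1 y hy'.1 hxy).2
      apply hna
      intro D hD _
      have hsub : {g : G | (g • x, g • y) ∉ fortEntourage F D} ⊆
          {g : G | g • x ∈ D} ∪ {g : G | g • y ∈ D} := by
        intro g hg
        by_contra hgg
        simp only [Set.mem_union, Set.mem_setOf_eq, not_or] at hgg
        exact hg (Or.inl (Set.mem_prod.mpr ⟨hgg.1, hgg.2⟩))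
      exact (Set.Finite.union (aux_fin hx.2 hD) (aux_fin hy'.2 hD)).subset hsub
    have hsubS : S ⊆ Hset ∪ ({b} ∪ {x ∈ S |
        ((MulAction.stabilizer G x : Subgroup G) : Set G).Finite}) := by
      intro x hxS
      by_cases hst : ((MulAction.stabilizer G x : Subgroup G) : Set G).Finite
      · exact Or.inr (Or.inr ⟨hxS, hst⟩)
      · by_cases horb : (MulAction.orbit G x).Infinite
        · exact Or.inl ⟨horb, hst⟩
        · exact Or.inr (Or.inl (claim1 x hxS horb))
    exact hSunc (Set.Countable.mono hsubS
      (hHc.union ((Set.countable_singleton b).union claim2.countable)))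
  · intro hHc
    refine ⟨Hset, hHc, ?_⟩
    intro x hx y hy hxy
    have hxb : x ≠ b := by
      intro hxe
      have horb := hx.1
      rw [hxe] at horb
      exact horb ((Set.finite_singleton b).subset (by rintro z ⟨g, rfl⟩; simp [hb g]))
    constructor
    · refine ⟨b, Filter.comap (fun g : G => g • x) Filter.cofinite ⊓
        Filter.comap (fun g : G => g • y) Filter.cofinite, ?_, ?_, ?_⟩
      · rw [← Filter.forall_mem_nonempty_iff_neBot]
        intro t ht
        rw [Filter.mem_inf_iff] at ht
        obtain ⟨t1, ht1, t2, ht2, rfl⟩ := ht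
        obtain ⟨A, hA, hA1⟩ := Filter.mem_comap.mp ht1
        obtain ⟨B, hB, hB1⟩ := Filter.mem_comap.mp ht2
        rw [Filter.mem_cofinite] at hA hB
        obtain ⟨g, hgx, hgy⟩ := aux_cover hx.1 hy.1 (hA.union hB)
        have hgA : g • x ∈ A := by by_contra h; exact hgx (Or.inl h)
        have hgB : g • y ∈ B := by by_contra h; exact hgy (Or.inr h)
        exact ⟨g, hA1 hgA, hB1 hgB⟩
      · rw [Filter.tendsto_def]
        intro U hU
        obtain ⟨V, hVU, hVo, hbV⟩ := mem_nhds_iff.mp hU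
        have hVc : (Vᶜ : Set F).Finite := (fort_isOpen_iff b V).mp hVo hbV
        refine Filter.mem_of_superset (Filter.mem_inf_of_left
          (Filter.preimage_mem_comap (Filter.mem_cofinite.mpr (by simpa using hVc))))
          (fun g hg => hVU hg)
      · rw [Filter.tendsto_def]
        intro U hU
        obtain ⟨V, hVU, hVo, hbV⟩ := mem_nhds_iff.mp hU
        have hVc : (Vᶜ : Set F).Finite := (fort_isOpen_iff b V).mp hVo hbV
        refine Filter.mem_of_superset (Filter.mem_inf_of_right
          (Filter.preimage_mem_comap (Filter.mem_cofinite.mpr (by simpa using hVc))))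
          (fun g hg => hVU hg)
    · intro hasym
      have hfin := hasym {x} (Set.finite_singleton x)
        (fun h => hxb (Set.mem_singleton_iff.mp h).symm)
      have hsub : ((MulAction.stabilizer G x : Subgroup G) : Set G) ⊆
          {g : G | (g • x, g • y) ∉ fortEntourage F {x}} := by
        intro g hg
        have hgx : g • x = x := hg
        intro hmem
        rcases hmem with h | h
        · exact h.1 (by simp [hgx])
        · exact hxy (MulAction.injective g h.2)
      exact hx.2 (Set.Finite.subset hfin hsub)
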